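/- Let M ≥ 1, g : Fin M → ℝ with g_m ≥ 0 for all m, and let z ∈ ℂ satisfy max(2·max_m g_m − Σ_m g_m, 0) ≤ |z| ≤ Σ_m g_m. Then there exist phases φ : Fin M → ℝ such that Σ_m g_m · exp(i φ_m) = z. Hence the set {Σ_m g_m exp(i φ_m) : φ ∈ ℝ^M} is exactly the closed annulus {z ∈ ℂ : max(2·max_m g_m − Σ_m g_m, 0) ≤ |z| ≤ Σ_m g_m}. -/

import Mathlib

open Complex Finset

/-- Two-arm linkage: if `|A - b| ≤ r ≤ A + b` with everything nonnegative, then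
`r` is reachable as `A e^{iα} + b e^{iβ}`. -/
lemma two_arm (A b r : ℝ) (hA : 0 ≤ A) (hb : 0 ≤ b) (hr : 0 ≤ r)
    (h1 : A - b ≤ r) (h2 : b - A ≤ r) (h3 : r ≤ A + b) :
    ∃ α β : ℝ, (A : ℂ) * Complex.exp ((α : ℂ) * Complex.I)
      + (b : ℂ) * Complex.exp ((β : ℂ) * Complex.I) = (r : ℂ) := by
  rcases eq_or_lt_of_le hr with hr0 | hr0
  · -- r = 0, so A = b; pick opposite phases
    have hAb : A = b := le_antisymm (by linarith) (by linarith)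
    refine ⟨0, Real.pi, ?_⟩
    simp [Complex.exp_pi_mul_I, hAb, ← hr0]
  rcases eq_or_lt_of_le hA with hA0 | hA0
  · -- A = 0 forces r = b
    have : r = b := le_antisymm (by linarith) (by linarith)
    refine ⟨0, 0, ?_⟩
    simp [← hA0, this]
  · set c : ℝ := (r ^ 2 + A ^ 2 - b ^ 2) / (2 * A * r) with hc
    have hd : (0:ℝ) < 2 * A * r := by positivity
    have hc1 : -1 ≤ c := by
      rw [hc, le_div_iff₀ hd]
      nlinarith
    have hc2 : c ≤ 1 := by
      rw [hc, div_le_one hd]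
      nlinarith
    set α := Real.arccos c with hα
    have hcos : Real.cos α = c := Real.cos_arccos hc1 hc2
    set w : ℂ := (r : ℂ) - (A : ℂ) * Complex.exp ((α : ℂ) * Complex.I) with hw
    have habs2 : (‖w‖) ^ 2 = b ^ 2 := by
      rw [Complex.sq_norm, Complex.normSq_apply, hw]
      simp only [Complex.exp_mul_I, Complex.sub_re, Complex.sub_im, Complex.add_re,
        Complex.add_im, Complex.mul_re, Complex.mul_im, Complex.ofReal_re, Complex.ofReal_im,
        Complex.I_re, Complex.I_im, Complex.cos_ofReal_re, Complex.sin_ofReal_re,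
        Complex.cos_ofReal_im, Complex.sin_ofReal_im]
      ring_nf
      have hs := Real.sin_sq_add_cos_sq α
      rw [hcos] at hs ⊢
      have hcmul : 2 * A * r * c = r ^ 2 + A ^ 2 - b ^ 2 := by
        rw [hc]; field_simp
      nlinarith [hs, hcmul]
    have habs : ‖w‖ = b := by
      nlinarith [norm_nonneg w]
    refine ⟨α, Complex.arg w, ?_⟩
    have := Complex.norm_mul_exp_arg_mul_I w
    rw [habs] at this
    rw [this, hw]
    ring

/-- Any `r` in the annulus interval is reachable as a real value. -/
lemma reach_real {ι : Type*} [DecidableEq ι] (s : Finset ι) (g : ι → ℝ)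
    (hg : ∀ i ∈ s, 0 ≤ g i) (r : ℝ) (hr0 : 0 ≤ r)
    (hlo : ∀ i ∈ s, 2 * g i - ∑ j ∈ s, g j ≤ r) (hhi : r ≤ ∑ j ∈ s, g j) :
    ∃ φ : ι → ℝ, ∑ i ∈ s, (g i : ℂ) * Complex.exp ((φ i : ℂ) * Complex.I) = (r : ℂ) := by
  induction s using Finset.induction_on generalizing r with
  | empty =>
    refine ⟨fun _ => 0, ?_⟩
    simp at hhi ⊢
    exact_mod_cast (le_antisymm hhi hr0).symm
  | insert a s ha ih =>
    have hga : 0 ≤ g a := hg a (Finset.mem_insert_self a s)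
    have hg' : ∀ i ∈ s, 0 ≤ g i := fun i hi => hg i (Finset.mem_insert_of_mem hi)
    have hS : ∑ j ∈ insert a s, g j = g a + ∑ j ∈ s, g j := Finset.sum_insert ha
    set A := g a with hA
    set B := ∑ j ∈ s, g j with hB
    have hB0 : 0 ≤ B := Finset.sum_nonneg hg'
    rcases s.eq_empty_or_nonempty with rfl | hs
    · -- only one arm: r = A
      have h1 : 2 * A - (A + 0) ≤ r := by simpa [hS] using hlo a (Finset.mem_insert_self a _)
      have h2 : r ≤ A + 0 := by simpa [hS] using hhi
      have hrA : r = A := by simp at h1 h2; linarith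
      refine ⟨fun _ => 0, ?_⟩
      simp [hrA, hA]
    · set G := s.sup' hs g with hG
      obtain ⟨i0, hi0, hGi0⟩ := Finset.exists_mem_eq_sup' hs g
      set b := max |A - r| (2 * G - B) with hbdef
      have hb0 : 0 ≤ b := le_trans (abs_nonneg _) (le_max_left _ _)
      have hi0B : g i0 ≤ B := Finset.single_le_sum hg' hi0
      have hloa : 2 * A - (A + B) ≤ r := by
        simpa [hS] using hlo a (Finset.mem_insert_self a _)
      have hloi0 : 2 * g i0 - (A + B) ≤ r := by
        simpa [hS] using hlo i0 (Finset.mem_insert_of_mem hi0)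
      have hhi' : r ≤ A + B := by simpa [hS] using hhi
      have habsAr : |A - r| ≤ B := abs_sub_le_iff.mpr ⟨by linarith, by linarith⟩
      have hbB : b ≤ B := max_le habsAr (by rw [hG, hGi0]; linarith)
      -- inner reachability
      obtain ⟨ψ, hψ⟩ := ih hg' b hb0
        (fun i hi => by
          have : g i ≤ G := Finset.le_sup' g hi
          have : 2 * g i - B ≤ 2 * G - B := by linarith
          exact le_trans this (le_max_right _ _))
        hbB
      -- two-arm step
      have habsAr' : A - r ≤ |A - r| := le_abs_self _
      have habsAr'' : r - A ≤ |A - r| := by rw [abs_sub_comm]; exact le_abs_self _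
      obtain ⟨α, β, hαβ⟩ := two_arm A b r hga hb0 hr0
        (by have := le_max_left |A - r| (2 * G - B); linarith)
        (by
          refine sub_le_iff_le_add.mpr (max_le ?_ ?_)
          · have : |A - r| ≤ A + r := abs_sub_le_iff.mpr ⟨by linarith, by linarith⟩
            linarith
          · rw [hG, hGi0]; linarith)
        (by have := le_max_left |A - r| (2 * G - B); linarith)
      refine ⟨Function.update (fun i => ψ i + β) a α, ?_⟩
      rw [Finset.sum_insert ha, Function.update_self]
      have hsum : ∑ i ∈ s, (g i : ℂ) * Complex.exp
          ((↑(Function.update (fun i => ψ i + β) a α i) : ℂ) * Complex.I)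
          = (b : ℂ) * Complex.exp ((β : ℂ) * Complex.I) := by
        rw [← hψ, Finset.sum_mul]
        refine Finset.sum_congr rfl fun i hi => ?_
        have hia : i ≠ a := fun h => ha (h ▸ hi)
        rw [Function.update_of_ne hia]
        push_cast
        rw [add_mul, Complex.exp_add]
        ring
      rw [hsum, hαβ]

lemma reach_z (M : ℕ) (hM : 1 ≤ M) (g : Fin M → ℝ) (hg : ∀ m, 0 ≤ g m) (z : ℂ)
    (hzlo : max (2 * (⨆ m, g m) - ∑ m, g m) 0 ≤ ‖z‖)
    (hzhi : ‖z‖ ≤ ∑ m, g m) :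
    ∃ φ : Fin M → ℝ, ∑ m, (g m : ℂ) * Complex.exp ((φ m : ℂ) * Complex.I) = z := by
  have : Nonempty (Fin M) := Fin.pos_iff_nonempty.mp hM
  have hbdd : BddAbove (Set.range g) := (Set.finite_range g).bddAbove
  obtain ⟨φ, hφ⟩ := reach_real Finset.univ g (fun i _ => hg i) (‖z‖)
    (norm_nonneg z)
    (fun i _ => by
      have h1 : g i ≤ ⨆ m, g m := le_ciSup hbdd i
      have h2 : 2 * (⨆ m, g m) - ∑ m, g m ≤ ‖z‖ :=
        le_trans (le_max_left _ _) hzlo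
      linarith)
    hzhi
  refine ⟨fun m => φ m + Complex.arg z, ?_⟩
  have : ∑ m, (g m : ℂ) * Complex.exp ((↑(φ m + Complex.arg z) : ℂ) * Complex.I)
      = (∑ m, (g m : ℂ) * Complex.exp ((φ m : ℂ) * Complex.I))
        * Complex.exp ((Complex.arg z : ℂ) * Complex.I) := by
    rw [Finset.sum_mul]
    refine Finset.sum_congr rfl fun i _ => ?_
    push_cast
    rw [add_mul, Complex.exp_add]
    ring
  rw [this, hφ, Complex.norm_mul_exp_arg_mul_I]

/-- Doughnut-region characterization: for `M ≥ 1` and nonnegative `g`, every `z` in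
the closed annulus `max (2 max_m g_m - Σ_m g_m) 0 ≤ |z| ≤ Σ_m g_m` can be written as
`Σ_m g_m exp(i φ_m)`; hence the set of such sums is exactly the annulus. -/
theorem sum_exp_annulus_reachable (M : ℕ) (hM : 1 ≤ M)
    (g : Fin M → ℝ) (hg : ∀ m, 0 ≤ g m) (z : ℂ)
    (hzlo : max (2 * (⨆ m, g m) - ∑ m, g m) 0 ≤ ‖z‖)
    (hzhi : ‖z‖ ≤ ∑ m, g m) :
    (∃ φ : Fin M → ℝ, ∑ m, (g m : ℂ) * Complex.exp ((φ m : ℂ) * Complex.I) = z) ∧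
    {w : ℂ | ∃ φ : Fin M → ℝ, ∑ m, (g m : ℂ) * Complex.exp ((φ m : ℂ) * Complex.I) = w}
      = {w : ℂ | max (2 * (⨆ m, g m) - ∑ m, g m) 0 ≤ ‖w‖ ∧
          ‖w‖ ≤ ∑ m, g m} := by
  have : Nonempty (Fin M) := Fin.pos_iff_nonempty.mp hM
  refine ⟨reach_z M hM g hg z hzlo hzhi, ?_⟩
  ext w
  simp only [Set.mem_setOf_eq]
  constructor
  · rintro ⟨φ, rfl⟩
    have habs_term : ∀ m : Fin M,
        ‖(g m : ℂ) * Complex.exp ((φ m : ℂ) * Complex.I)‖ = g m := by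
      intro m
      rw [norm_mul, Complex.norm_exp_ofReal_mul_I, mul_one, Complex.norm_real, Real.norm_eq_abs,
        _root_.abs_of_nonneg (hg m)]
    have hupper : ‖∑ m, (g m : ℂ) * Complex.exp ((φ m : ℂ) * Complex.I)‖
        ≤ ∑ m, g m := by
      refine le_trans (norm_sum_le _ _) (le_of_eq ?_)
      exact Finset.sum_congr rfl fun m _ => habs_term m
    refine ⟨?_, hupper⟩
    refine max_le ?_ (norm_nonneg _)
    have key : ∀ m : Fin M, 2 * g m - ∑ m, g m
        ≤ ‖∑ m, (g m : ℂ) * Complex.exp ((φ m : ℂ) * Complex.I)‖ := by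
      intro m
      set w := ∑ m, (g m : ℂ) * Complex.exp ((φ m : ℂ) * Complex.I) with hwdef
      have hsplit : w = (g m : ℂ) * Complex.exp ((φ m : ℂ) * Complex.I)
          + ∑ i ∈ Finset.univ.erase m, (g i : ℂ) * Complex.exp ((φ i : ℂ) * Complex.I) := by
        rw [hwdef, ← Finset.add_sum_erase _ _ (Finset.mem_univ m)]
      have h1 : g m ≤ ‖w‖ + ∑ i ∈ Finset.univ.erase m, g i := by
        have : (g m : ℂ) * Complex.exp ((φ m : ℂ) * Complex.I)
            = w - ∑ i ∈ Finset.univ.erase m, (g i : ℂ) * Complex.exp ((φ i : ℂ) * Complex.I) := by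
          rw [hsplit]; ring
        calc g m = ‖(g m : ℂ) * Complex.exp ((φ m : ℂ) * Complex.I)‖ :=
              (habs_term m).symm
          _ = ‖w - ∑ i ∈ Finset.univ.erase m,
                (g i : ℂ) * Complex.exp ((φ i : ℂ) * Complex.I)‖ := by rw [this]
          _ ≤ ‖w‖ + ‖∑ i ∈ Finset.univ.erase m,
                (g i : ℂ) * Complex.exp ((φ i : ℂ) * Complex.I)‖ := by
                  have tri : ∀ u v : ℂ, ‖u - v‖
                      ≤ ‖u‖ + ‖v‖ := fun u v => by
                    calc ‖u - v‖ ≤ ‖u‖ + ‖-v‖ :=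
                          by simpa [sub_eq_add_neg] using norm_add_le u (-v)
                      _ = ‖u‖ + ‖v‖ := by rw [norm_neg]
                  exact tri _ _
          _ ≤ ‖w‖ + ∑ i ∈ Finset.univ.erase m, g i := by
              refine add_le_add (le_refl _) (le_trans (norm_sum_le _ _) (le_of_eq ?_))
              exact Finset.sum_congr rfl fun i _ => habs_term i
      have h2 : ∑ i ∈ Finset.univ.erase m, g i = (∑ i, g i) - g m := by
        rw [← Finset.add_sum_erase _ g (Finset.mem_univ m)]; ring
      rw [h2] at h1
      linarith
    have hbdd : BddAbove (Set.range g) := (Set.finite_range g).bddAbove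
    have : (⨆ m, g m) ≤ (‖∑ m, (g m : ℂ) * Complex.exp ((φ m : ℂ) * Complex.I)‖
        + ∑ m, g m) / 2 := ciSup_le fun m => by linarith [key m]
    linarith
  · rintro ⟨h1, h2⟩
    exact reach_z M hM g hg w h1 h2
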